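/- Let W and T be real symmetric positive definite n×n matrices and α > 0. Then the spectral radius of G_α = (W + αT)^{-1} (T - αW) (αW + T)^{-1} (W - αT) is strictly less than 1. -/

import Mathlib

open Matrix

/-- positive scalar multiple of a PosDef real matrix is PosDef -/
lemma aux_posDef_smul {n : ℕ} {M : Matrix (Fin n) (Fin n) ℝ} (hM : M.PosDef) {c : ℝ}
    (hc : 0 < c) : (c • M).PosDef := by
  refine posDef_iff_dotProduct_mulVec.mpr ⟨?_, fun x hx => ?_⟩
  · unfold Matrix.IsHermitian
    rw [conjTranspose_smul, hM.1.eq]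
    simp
  · rw [smul_mulVec, dotProduct_smul]
    simpa using mul_pos hc (hM.dotProduct_mulVec_pos hx)

/-- congruence preserves PosDef (real case) -/
lemma aux_posDef_conj {n : ℕ} {A B : Matrix (Fin n) (Fin n) ℝ} (hA : A.PosDef)
    (hB : IsUnit B.det) : (Bᴴ * A * B).PosDef := by
  refine posDef_iff_dotProduct_mulVec.mpr ⟨?_, fun x hx => ?_⟩
  · unfold Matrix.IsHermitian
    rw [conjTranspose_mul, conjTranspose_mul, conjTranspose_conjTranspose, hA.1.eq, mul_assoc]
  · have hBx : B *ᵥ x ≠ 0 := by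
      intro h
      apply hx
      have : B⁻¹ *ᵥ (B *ᵥ x) = x := by
        rw [mulVec_mulVec, Matrix.nonsing_inv_mul B hB, one_mulVec]
      rw [h, mulVec_zero] at this
      exact this.symm
    have key : star x ⬝ᵥ (Bᴴ * A * B) *ᵥ x = star (B *ᵥ x) ⬝ᵥ A *ᵥ (B *ᵥ x) := by
      rw [← mulVec_mulVec, ← mulVec_mulVec, dotProduct_mulVec (star x) Bᴴ, ← star_mulVec]
    rw [key]
    exact hA.dotProduct_mulVec_pos hBx

lemma aux_abs_lt_one {α μ : ℝ} (hα : 0 < α) (hμ : 0 < μ) :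
    |(1 + α * μ)⁻¹ * (μ - α) * (α + μ)⁻¹ * (1 - α * μ)| < 1 := by
  have h1 : 0 < 1 + α * μ := by nlinarith
  have h2 : 0 < α + μ := by linarith
  have e : |(1 + α * μ)⁻¹ * (μ - α) * (α + μ)⁻¹ * (1 - α * μ)|
      = (|μ - α| * |1 - α * μ|) / ((α + μ) * (1 + α * μ)) := by
    rw [abs_mul, abs_mul, abs_mul, abs_inv, abs_inv, abs_of_pos h1, abs_of_pos h2]
    field_simp
  rw [e, div_lt_one (by positivity)]
  have hA : |μ - α| < α + μ := abs_sub_lt_iff.mpr ⟨by linarith, by linarith⟩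
  have hB : |1 - α * μ| < 1 + α * μ := by
    have : 0 < α * μ := mul_pos hα hμ
    exact abs_sub_lt_iff.mpr ⟨by linarith, by linarith⟩
  have := mul_lt_mul'' hA hB (abs_nonneg _) (abs_nonneg _)
  linarith

open scoped MatrixOrder in
lemma aux_sqrt {n : ℕ} {W : Matrix (Fin n) (Fin n) ℝ} (hW : W.PosDef) :
    ∃ R : Matrix (Fin n) (Fin n) ℝ, R * R = W ∧ R.IsHermitian :=
  ⟨CFC.sqrt W, CFC.sqrt_mul_sqrt_self W hW.posSemidef.nonneg,
    (nonneg_iff_posSemidef.mp (CFC.sqrt_nonneg W)).isHermitian⟩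

theorem stmt1 {n : ℕ} (W T : Matrix (Fin n) (Fin n) ℝ)
    (hW : W.PosDef) (hT : T.PosDef) (α : ℝ) (hα : 0 < α) :
    spectralRadius ℂ (((W + α • T)⁻¹ * (T - α • W) * (α • W + T)⁻¹ * (W - α • T)).map
      Complex.ofReal) < 1 := by
  classical
  -- square root of W
  obtain ⟨R, hRR, hRherm⟩ := aux_sqrt hW
  have hRdet : IsUnit R.det := by
    have : R.det * R.det = W.det := by rw [← det_mul, hRR]
    have hWdet := hW.det_pos
    refine isUnit_iff_ne_zero.mpr fun h => ?_
    rw [h, mul_zero] at this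
    exact absurd this.symm (ne_of_gt hWdet)
  have hRRinv : R * R⁻¹ = 1 := Matrix.mul_nonsing_inv R hRdet
  have hRinvR : R⁻¹ * R = 1 := Matrix.nonsing_inv_mul R hRdet
  have hRinvHerm : (R⁻¹).IsHermitian := by
    unfold Matrix.IsHermitian
    rw [conjTranspose_nonsing_inv, hRherm.eq]
  -- S = R⁻¹ T R⁻¹
  set S : Matrix (Fin n) (Fin n) ℝ := R⁻¹ * T * R⁻¹ with hSdef
  have hS : S.PosDef := by
    have hdet : IsUnit (R⁻¹).det := R.isUnit_nonsing_inv_det hRdet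
    have := aux_posDef_conj hT hdet
    rwa [hRinvHerm.eq] at this
  -- helper cancellations
  have cancel1 : ∀ X : Matrix (Fin n) (Fin n) ℝ, R⁻¹ * (R * X) = X := fun X => by
    rw [← Matrix.mul_assoc, hRinvR, Matrix.one_mul]
  have cancel2 : ∀ X : Matrix (Fin n) (Fin n) ℝ, R * (R⁻¹ * X) = X := fun X => by
    rw [← Matrix.mul_assoc, hRRinv, Matrix.one_mul]
  have hRSR : R * S * R = T := by
    rw [hSdef]
    simp only [Matrix.mul_assoc]
    rw [hRinvR, Matrix.mul_one, cancel2]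
  -- positive definiteness of the shifted matrices
  have h1 : (1 + α • S).PosDef := Matrix.PosDef.add Matrix.PosDef.one (aux_posDef_smul hS hα)
  have h2 : (α • (1 : Matrix (Fin n) (Fin n) ℝ) + S).PosDef :=
    Matrix.PosDef.add (aux_posDef_smul Matrix.PosDef.one hα) hS
  have h1det : IsUnit (1 + α • S).det := isUnit_iff_ne_zero.mpr (ne_of_gt h1.det_pos)
  have h2det : IsUnit (α • (1 : Matrix (Fin n) (Fin n) ℝ) + S).det :=
    isUnit_iff_ne_zero.mpr (ne_of_gt h2.det_pos)
  -- the four factorizations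
  have e1 : W + α • T = R * (1 + α • S) * R := by
    rw [Matrix.mul_add, Matrix.add_mul, Matrix.mul_one, hRR, Matrix.mul_smul,
      Matrix.smul_mul, hRSR]
  have e2 : T - α • W = R * (S - α • 1) * R := by
    rw [Matrix.mul_sub, Matrix.sub_mul, Matrix.mul_smul, Matrix.mul_one, Matrix.smul_mul,
      hRSR, hRR]
  have e3 : α • W + T = R * (α • 1 + S) * R := by
    rw [Matrix.mul_add, Matrix.add_mul, Matrix.mul_smul, Matrix.mul_one, Matrix.smul_mul,
      hRSR, hRR]
  have e4 : W - α • T = R * (1 - α • S) * R := by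
    rw [Matrix.mul_sub, Matrix.sub_mul, Matrix.mul_one, hRR, Matrix.mul_smul,
      Matrix.smul_mul, hRSR]
  have e1inv : (W + α • T)⁻¹ = R⁻¹ * (1 + α • S)⁻¹ * R⁻¹ := by
    rw [e1, Matrix.mul_inv_rev, Matrix.mul_inv_rev, ← Matrix.mul_assoc]
  have e3inv : (α • W + T)⁻¹ = R⁻¹ * (α • 1 + S)⁻¹ * R⁻¹ := by
    rw [e3, Matrix.mul_inv_rev, Matrix.mul_inv_rev, ← Matrix.mul_assoc]
  -- the similarity
  set N : Matrix (Fin n) (Fin n) ℝ :=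
    (1 + α • S)⁻¹ * (S - α • 1) * (α • 1 + S)⁻¹ * (1 - α • S) with hNdef
  have hMN : (W + α • T)⁻¹ * (T - α • W) * (α • W + T)⁻¹ * (W - α • T) = R⁻¹ * N * R := by
    rw [e1inv, e2, e3inv, e4, hNdef]
    simp only [Matrix.mul_assoc, cancel1, cancel2]
  -- spectral theorem for S over ℝ
  have hSh : S.IsHermitian := hS.1
  set V : Matrix (Fin n) (Fin n) ℝ := (hSh.eigenvectorUnitary : Matrix (Fin n) (Fin n) ℝ)
    with hVdef
  have hVV : V * star V = 1 := (Matrix.mem_unitaryGroup_iff).mp hSh.eigenvectorUnitary.2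
  have hVV' : star V * V = 1 := (Matrix.mem_unitaryGroup_iff').mp hSh.eigenvectorUnitary.2
  set μ : Fin n → ℝ := hSh.eigenvalues with hμdef
  have hμpos : ∀ i, 0 < μ i := fun i => hS.eigenvalues_pos i
  have hspec : S = V * diagonal μ * star V := by
    have := hSh.spectral_theorem
    simpa [RCLike.ofReal_real_eq_id] using this
  -- diagonal entries
  set d1 : Fin n → ℝ := fun i => 1 + α * μ i with hd1def
  set d2 : Fin n → ℝ := fun i => μ i - α with hd2def
  set d3 : Fin n → ℝ := fun i => α + μ i with hd3def
  set d4 : Fin n → ℝ := fun i => 1 - α * μ i with hd4def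
  have hd1pos : ∀ i, 0 < d1 i := fun i => by have := hμpos i; have := mul_pos hα this; simp [hd1def]; nlinarith
  have hd3pos : ∀ i, 0 < d3 i := fun i => by have := hμpos i; simp [hd3def]; linarith
  have hd1m : (diagonal d1 : Matrix (Fin n) (Fin n) ℝ) = 1 + α • diagonal μ := by
    rw [← diagonal_one, ← Matrix.diagonal_smul, ← diagonal_add]
    rfl
  have hd2m : (diagonal d2 : Matrix (Fin n) (Fin n) ℝ) = diagonal μ - α • 1 := by
    ext i j
    by_cases h : i = j <;>
      simp [h, hd2def, Matrix.diagonal_apply, Matrix.one_apply, Matrix.sub_apply]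
  have hd3m : (diagonal d3 : Matrix (Fin n) (Fin n) ℝ) = α • 1 + diagonal μ := by
    ext i j
    by_cases h : i = j <;>
      simp [h, hd3def, Matrix.diagonal_apply, Matrix.one_apply, Matrix.add_apply]
  have hd4m : (diagonal d4 : Matrix (Fin n) (Fin n) ℝ) = 1 - α • diagonal μ := by
    rw [← diagonal_one, ← Matrix.diagonal_smul, ← diagonal_sub]
    rfl
  -- conjugation identities
  have f1 : 1 + α • S = V * diagonal d1 * star V := by
    rw [hspec, hd1m, Matrix.mul_add, Matrix.add_mul, Matrix.mul_one, hVV, Matrix.mul_smul,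
      Matrix.smul_mul]
  have f2 : S - α • 1 = V * diagonal d2 * star V := by
    rw [hspec, hd2m, Matrix.mul_sub, Matrix.sub_mul, Matrix.mul_smul, Matrix.mul_one,
      Matrix.smul_mul, hVV]
  have f3 : α • 1 + S = V * diagonal d3 * star V := by
    rw [hspec, hd3m, Matrix.mul_add, Matrix.add_mul, Matrix.mul_smul, Matrix.mul_one,
      Matrix.smul_mul, hVV]
  have f4 : 1 - α • S = V * diagonal d4 * star V := by
    rw [hspec, hd4m, Matrix.mul_sub, Matrix.sub_mul, Matrix.mul_one, hVV, Matrix.mul_smul,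
      Matrix.smul_mul]
  have hVinv : V⁻¹ = star V := Matrix.inv_eq_left_inv hVV'
  have hsVinv : (star V)⁻¹ = V := Matrix.inv_eq_left_inv hVV
  have finv : ∀ D : Matrix (Fin n) (Fin n) ℝ, (V * D * star V)⁻¹ = V * D⁻¹ * star V := by
    intro D
    rw [Matrix.mul_inv_rev, Matrix.mul_inv_rev, hVinv, hsVinv, ← Matrix.mul_assoc]
  have dinv : ∀ d : Fin n → ℝ, (∀ i, d i ≠ 0) → (diagonal d)⁻¹ = diagonal (fun i => (d i)⁻¹) := by
    intro d hd
    apply Matrix.inv_eq_right_inv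
    rw [diagonal_mul_diagonal]
    have : (fun i => d i * (d i)⁻¹) = fun _ => (1 : ℝ) := funext fun i => mul_inv_cancel₀ (hd i)
    rw [this, diagonal_one]
  have conjmul : ∀ A B : Matrix (Fin n) (Fin n) ℝ,
      (V * A * star V) * (V * B * star V) = V * (A * B) * star V := by
    intro A B
    calc (V * A * star V) * (V * B * star V) = V * (A * ((star V * V) * (B * star V))) := by
          simp only [Matrix.mul_assoc]
      _ = V * (A * B) * star V := by rw [hVV', Matrix.one_mul]; simp only [Matrix.mul_assoc]
  set g : Fin n → ℝ := fun i => (d1 i)⁻¹ * d2 i * (d3 i)⁻¹ * d4 i with hgdef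
  have hN : N = V * diagonal g * star V := by
    rw [hNdef, f1, f2, f3, f4, finv, finv, dinv d1 (fun i => ne_of_gt (hd1pos i)),
      dinv d3 (fun i => ne_of_gt (hd3pos i)), conjmul, conjmul, conjmul,
      diagonal_mul_diagonal, diagonal_mul_diagonal, diagonal_mul_diagonal]
  -- move to ℂ
  set F : Matrix (Fin n) (Fin n) ℝ →+* Matrix (Fin n) (Fin n) ℂ :=
    Complex.ofRealHom.mapMatrix with hFdef
  have hmapF : ∀ A : Matrix (Fin n) (Fin n) ℝ, A.map Complex.ofReal = F A := fun _ => rfl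
  set gc : Fin n → ℂ := fun i => (g i : ℂ) with hgcdef
  have u1 : (R⁻¹ * V) * (star V * R) = 1 := by
    calc (R⁻¹ * V) * (star V * R) = R⁻¹ * ((V * star V) * R) := by simp only [Matrix.mul_assoc]
      _ = 1 := by rw [hVV, Matrix.one_mul, hRinvR]
  have u2 : (star V * R) * (R⁻¹ * V) = 1 := by
    calc (star V * R) * (R⁻¹ * V) = star V * ((R * R⁻¹) * V) := by simp only [Matrix.mul_assoc]
      _ = 1 := by rw [hRRinv, Matrix.one_mul, hVV']
  set uc : (Matrix (Fin n) (Fin n) ℂ)ˣ :=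
    ⟨F (R⁻¹ * V), F (star V * R), by rw [← F.map_mul, u1, F.map_one],
      by rw [← F.map_mul, u2, F.map_one]⟩
    with hucdef
  have key : ((W + α • T)⁻¹ * (T - α • W) * (α • W + T)⁻¹ * (W - α • T)).map Complex.ofReal
      = (uc : Matrix (Fin n) (Fin n) ℂ) * diagonal gc * ((uc⁻¹ : (Matrix (Fin n) (Fin n) ℂ)ˣ) : Matrix (Fin n) (Fin n) ℂ) := by
    rw [hMN, hN, hmapF]
    have assoc : R⁻¹ * (V * diagonal g * star V) * R = (R⁻¹ * V) * diagonal g * (star V * R) := by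
      simp only [Matrix.mul_assoc]
    rw [assoc, F.map_mul, F.map_mul]
    have hd : F (diagonal g) = diagonal gc := by
      rw [← hmapF, Matrix.diagonal_map Complex.ofReal_zero]
    rw [hd]
    rfl
  have hspectrum : spectrum ℂ (((W + α • T)⁻¹ * (T - α • W) * (α • W + T)⁻¹
      * (W - α • T)).map Complex.ofReal) = Set.range gc := by
    rw [key, spectrum.units_conjugate, spectrum_diagonal]
  have hrad : spectralRadius ℂ (((W + α • T)⁻¹ * (T - α • W) * (α • W + T)⁻¹
      * (W - α • T)).map Complex.ofReal) = ⨆ i, (‖gc i‖₊ : ENNReal) := by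
    rw [spectralRadius, hspectrum, iSup_range]
  rw [hrad]
  have hgi : ∀ i, (‖gc i‖₊ : ENNReal) < 1 := by
    intro i
    have habs : |g i| < 1 := by
      have := aux_abs_lt_one hα (hμpos i)
      simpa [hgdef, hd1def, hd2def, hd3def, hd4def] using this
    have hnorm : ‖g i‖₊ < 1 := by
      rw [← NNReal.coe_lt_coe, coe_nnnorm, NNReal.coe_one, Real.norm_eq_abs]
      exact habs
    rw [hgcdef]
    simp only [Complex.nnnorm_real]
    exact_mod_cast hnorm
  rcases isEmpty_or_nonempty (Fin n) with h | h
  · rw [iSup_of_empty]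
    simpa using (zero_lt_one : (0 : ENNReal) < 1)
  · obtain ⟨i0, hi0⟩ := Finite.exists_max (fun i => (‖gc i‖₊ : ENNReal))
    exact lt_of_le_of_lt (iSup_le hi0) (hgi i0)
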